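/- For n ≥ 8, any two nontrivial permutations in S_n, neither of which has order equal to a prime p with p ≥ n−1, lie in the same connected component of the proper power graph of S_n. -/

import Mathlib

def properPowerGraph (G : Type*) [Group G] :
    SimpleGraph {g : G // g ≠ 1} where
  Adj x y := x ≠ y ∧ ((∃ m : ℕ, (x : G) = (y : G) ^ m) ∨
    (∃ m : ℕ, (y : G) = (x : G) ^ m))
  symm := by
    constructor
    rintro x y ⟨hxy, h⟩
    exact ⟨hxy.symm, h.symm⟩
  loopless := by constructor; rintro x ⟨hx, -⟩; exact hx rfl

section General

variable {G : Type*} [Group G]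

lemma ppg_reach_of_pow {x y : G} (hx : x ≠ 1) (hy : y ≠ 1)
    (h : ∃ m : ℕ, x = y ^ m) :
    (properPowerGraph G).Reachable ⟨x, hx⟩ ⟨y, hy⟩ := by
  by_cases hxy : x = y
  · subst hxy
    rfl
  · exact SimpleGraph.Adj.reachable ⟨by simp [Subtype.ext_iff, hxy], Or.inl h⟩

lemma ppg_reach_mul {x y : G} (hc : Commute x y) (hx : x ≠ 1) (hy : y ≠ 1)
    (hco : Nat.Coprime (orderOf x) (orderOf y)) :
    (properPowerGraph G).Reachable ⟨x, hx⟩ ⟨y, hy⟩ := by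
  have hxy1 : x * y ≠ 1 := by
    intro h
    have hyx : y = x⁻¹ := eq_inv_of_mul_eq_one_left (hc.eq ▸ h)
    rw [hyx, orderOf_inv] at hco
    exact hx (orderOf_eq_one_iff.mp ((Nat.coprime_self _).mp hco))
  have key : ∀ a b : G, Commute a b → Nat.Coprime (orderOf a) (orderOf b) →
      ∃ m : ℕ, a = (a * b) ^ m := by
    intro a b hab hab'
    obtain ⟨m, hm1, hm2⟩ := Nat.chineseRemainder hab' 1 0
    refine ⟨m, ?_⟩
    rw [hab.mul_pow]
    have ha : a ^ m = a ^ 1 := pow_eq_pow_iff_modEq.mpr hm1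
    have hb : b ^ m = b ^ 0 := pow_eq_pow_iff_modEq.mpr hm2
    rw [ha, hb, pow_one, pow_zero, mul_one]
  obtain ⟨m, hm⟩ := key x y hc hco
  obtain ⟨m', hm'⟩ := key y x hc.symm hco.symm
  have h1 : (properPowerGraph G).Reachable ⟨x, hx⟩ ⟨x * y, hxy1⟩ :=
    ppg_reach_of_pow hx hxy1 ⟨m, hm⟩
  have hyx1 : y * x ≠ 1 := by rwa [← hc.eq]
  have h2 : (properPowerGraph G).Reachable ⟨y, hy⟩ ⟨y * x, hyx1⟩ :=
    ppg_reach_of_pow hy hyx1 ⟨m', hm'⟩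
  have h3 : (⟨y * x, hyx1⟩ : {g : G // g ≠ 1}) = ⟨x * y, hxy1⟩ := by
    simp [Subtype.ext_iff, hc.eq]
  rw [h3] at h2
  exact h1.trans h2.symm

lemma ppg_reach_conj {x y : G} {hx : x ≠ 1} {hy : y ≠ 1} (g : G)
    (h : (properPowerGraph G).Reachable ⟨x, hx⟩ ⟨y, hy⟩) :
    (properPowerGraph G).Reachable
      ⟨g * x * g⁻¹, by simpa using hx⟩ ⟨g * y * g⁻¹, by simpa using hy⟩ := by
  let φ : properPowerGraph G →g properPowerGraph G :=
    { toFun := fun z => ⟨g * z.1 * g⁻¹, by simpa using z.2⟩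
      map_rel' := by
        rintro a b ⟨hne, h⟩
        constructor
        · simpa [Subtype.ext_iff] using Subtype.coe_ne_coe.mpr hne
        · rcases h with ⟨m, hm⟩ | ⟨m, hm⟩
          · exact Or.inl ⟨m, by rw [conj_pow, ← hm]⟩
          · exact Or.inr ⟨m, by rw [conj_pow, ← hm]⟩ }
  exact h.map φ

end General
section PermHelpers

open Equiv Equiv.Perm

variable {α : Type*} [Fintype α] [DecidableEq α]

lemma orderOf_swap {a b : α} (hab : a ≠ b) : orderOf (Equiv.swap a b) = 2 := by
  refine orderOf_eq_prime ?_ ?_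
  · rw [pow_two, Equiv.swap_mul_self]
  · simp [Equiv.ext_iff]
    exact ⟨a, by simp [Equiv.swap_apply_left, hab.symm]⟩

lemma prime_order_cycleType {q : ℕ} (hq : q.Prime) {u : Perm α} (hu : orderOf u = q) :
    ∃ k : ℕ, 0 < k ∧ u.cycleType = Multiset.replicate k q ∧ u.support.card = k * q := by
  have hu1 : u ≠ 1 := by
    intro h; rw [h, orderOf_one] at hu; have := hq.one_lt; omega
  have hall : ∀ l ∈ u.cycleType, l = q := by
    intro l hl
    have h1 : l ∣ q := hu ▸ Equiv.Perm.dvd_of_mem_cycleType hl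
    rcases (Nat.Prime.eq_one_or_self_of_dvd hq l h1) with h | h
    · exact absurd h (by have := Equiv.Perm.two_le_of_mem_cycleType hl; omega)
    · exact h
  refine ⟨Multiset.card u.cycleType, ?_, ?_, ?_⟩
  · exact Equiv.Perm.card_cycleType_pos.mpr hu1
  · exact (Multiset.eq_replicate_card.mpr hall)
  · rw [← Equiv.Perm.sum_cycleType, Multiset.eq_replicate_card.mpr hall,
      Multiset.sum_replicate, smul_eq_mul, Multiset.card_replicate, mul_comm]

lemma support_pow_eq_of_cycleType {u : Perm α} {j : ℕ}
    (h : ∀ l ∈ u.cycleType, ¬ (l ∣ j)) : (u ^ j).support = u.support := by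
  refine le_antisymm (Equiv.Perm.support_pow_le u j) ?_
  intro x hx
  rw [Equiv.Perm.mem_support] at hx ⊢
  intro hfix
  set c := u.cycleOf x with hc
  have hcx : c x ≠ x := by rw [hc, Equiv.Perm.cycleOf_apply_self]; exact hx
  have hcyc : c.IsCycle := Equiv.Perm.isCycle_cycleOf u hx
  have hpow : (c ^ j) x = x := by
    rw [hc, Equiv.Perm.cycleOf_pow_apply_self]; exact hfix
  have hone : c ^ j = 1 := (hcyc.pow_eq_one_iff' hcx).mpr hpow
  have hdvd : orderOf c ∣ j := orderOf_dvd_of_pow_eq_one hone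
  rw [hcyc.orderOf] at hdvd
  refine h c.support.card ?_ hdvd
  rw [Equiv.Perm.cycleType, Multiset.mem_map]
  exact ⟨c, by rwa [← Finset.mem_def, Equiv.Perm.cycleOf_mem_cycleFactorsFinset_iff,
    Equiv.Perm.mem_support], rfl⟩

lemma exists_disjoint_model (m₁ m₂ : Multiset ℕ)
    (hsum : m₁.sum + m₂.sum ≤ Fintype.card α)
    (h2 : ∀ a ∈ m₁, 2 ≤ a) (h2' : ∀ a ∈ m₂, 2 ≤ a) :
    ∃ E R : Perm α, E.cycleType = m₁ ∧ R.cycleType = m₂ ∧ E.Disjoint R := by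
  obtain ⟨E, hE⟩ := (Equiv.Perm.exists_with_cycleType_iff α).mpr ⟨by omega, h2⟩
  have hcard : m₂.sum ≤ Fintype.card {x : α // x ∉ E.support} := by
    have h1 : Fintype.card {x : α // x ∉ E.support} = Fintype.card α - E.support.card := by
      rw [Fintype.card_subtype_compl, Fintype.card_coe]
    have h2 : E.support.card = m₁.sum := by rw [← Equiv.Perm.sum_cycleType, hE]
    omega
  obtain ⟨R0, hR0⟩ := (Equiv.Perm.exists_with_cycleType_iff
    {x : α // x ∉ E.support}).mpr ⟨hcard, h2'⟩
  refine ⟨E, Equiv.Perm.ofSubtype R0, hE, ?_, ?_⟩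
  · rw [Equiv.Perm.cycleType_ofSubtype, hR0]
  · intro x
    by_cases hx : x ∈ E.support
    · right
      exact Equiv.Perm.ofSubtype_apply_of_not_mem R0 (by simpa using hx)
    · left
      simpa using hx

end PermHelpers
section Main

open Equiv Equiv.Perm

variable {n : ℕ}

/-- `z` is connected to some transposition in the proper power graph. -/
def ReachesSwap (z : Equiv.Perm (Fin n)) (hz : z ≠ 1) : Prop :=
  ∃ w : {g : Equiv.Perm (Fin n) // g ≠ 1},
    (properPowerGraph (Equiv.Perm (Fin n))).Reachable ⟨z, hz⟩ w ∧ w.1.IsSwap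

lemma ReachesSwap.of_reach {z z' : Equiv.Perm (Fin n)} {hz : z ≠ 1} {hz' : z' ≠ 1}
    (hr : (properPowerGraph (Equiv.Perm (Fin n))).Reachable ⟨z, hz⟩ ⟨z', hz'⟩)
    (h : ReachesSwap z' hz') : ReachesSwap z hz := by
  obtain ⟨w, hw1, hw2⟩ := h
  exact ⟨w, hr.trans hw1, hw2⟩

lemma ReachesSwap.conj {z z' : Equiv.Perm (Fin n)} {hz' : z' ≠ 1} (hz : z ≠ 1)
    (hconj : IsConj z' z) (h : ReachesSwap z' hz') :
    ReachesSwap z hz := by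
  obtain ⟨c, hc⟩ := isConj_iff.mp hconj
  obtain ⟨⟨w, hw0⟩, hw1, hw2⟩ := h
  have hr := ppg_reach_conj (c : Equiv.Perm (Fin n)) hw1
  refine ⟨⟨c * w * c⁻¹, by simpa using hw0⟩, ?_, ?_⟩
  · have : (⟨c * z' * c⁻¹, by simpa using hz'⟩ : {g : Equiv.Perm (Fin n) // g ≠ 1})
        = ⟨z, hz⟩ := by simp [Subtype.ext_iff, hc]
    rwa [this] at hr
  · obtain ⟨a, b, hab, rfl⟩ := hw2
    refine ⟨c a, c b, by simp [hab], ?_⟩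
    simp [← Equiv.swap_apply_apply]

lemma exists_fresh_points (s : Finset (Fin n)) (k : ℕ) (h : s.card + k ≤ n) :
    ∃ t : Finset (Fin n), t.card = k ∧ Disjoint t s := by
  have hcc : k ≤ sᶜ.card := by
    rw [Finset.card_compl]
    simp only [Fintype.card_fin]
    omega
  obtain ⟨t, hts, htc⟩ := Finset.exists_subset_card_eq hcc
  exact ⟨t, htc, Finset.disjoint_left.mpr fun a hat => by
    have := hts hat; simp only [Finset.mem_compl] at this; exact this⟩

/-- An element of odd order with two points outside its support reaches a swap. -/
lemma reachesSwap_of_odd_order {z : Equiv.Perm (Fin n)} (hz1 : z ≠ 1)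
    (hodd : ¬ 2 ∣ orderOf z) {a b : Fin n} (hab : a ≠ b)
    (ha : a ∉ z.support) (hb : b ∉ z.support) : ReachesSwap z hz1 := by
  set t := Equiv.swap a b with ht
  have ht1 : t ≠ 1 := by simp [ht, Equiv.swap_eq_one_iff, hab]
  have hdisj : z.Disjoint t := by
    rw [Equiv.Perm.disjoint_iff_disjoint_support, Equiv.Perm.support_swap hab]
    rw [Finset.disjoint_insert_right, Finset.disjoint_singleton_right]
    exact ⟨ha, hb⟩
  have hco : Nat.Coprime (orderOf z) (orderOf t) := by
    rw [ht, orderOf_swap hab]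
    exact Nat.coprime_two_right.mpr (Nat.odd_iff.mpr (by omega))
  exact ⟨⟨t, ht1⟩, ppg_reach_mul hdisj.commute hz1 ht1 hco, a, b, hab, rfl⟩

end Main
section Main2

open Equiv Equiv.Perm

variable {n : ℕ}

lemma card_le_n (s : Finset (Fin n)) : s.card ≤ n := by
  simpa using Finset.card_le_univ s

/-- An element of order 2 with three points outside its support reaches a swap. -/
lemma reachesSwap_of_order_two_fixed (hn : 8 ≤ n) {z : Equiv.Perm (Fin n)}
    (h2 : orderOf z = 2) (hz : z ≠ 1) {x y w : Fin n}
    (hxy : x ≠ y) (hxw : x ≠ w) (hyw : y ≠ w)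
    (hx : x ∉ z.support) (hy : y ∉ z.support) (hw : w ∉ z.support) :
    ReachesSwap z hz := by
  set c3 := Equiv.swap x y * Equiv.swap x w with hc3
  have ht : c3.IsThreeCycle := Equiv.Perm.isThreeCycle_swap_mul_swap_same hxy hxw hyw
  have hc31 : c3 ≠ 1 := by
    intro h
    have := ht.orderOf
    rw [h, orderOf_one] at this
    omega
  have hsupp : c3.support ⊆ {x, y, w} := by
    refine (Equiv.Perm.support_mul_le _ _).trans ?_
    rw [Equiv.Perm.support_swap hxy, Equiv.Perm.support_swap hxw]
    intro u hu
    simp only [Finset.sup_eq_union, Finset.mem_union, Finset.mem_insert,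
      Finset.mem_singleton] at hu ⊢
    tauto
  have hdisj : z.Disjoint c3 := by
    rw [Equiv.Perm.disjoint_iff_disjoint_support]
    refine Finset.disjoint_left.mpr fun a haz hac => ?_
    have := hsupp hac
    simp only [Finset.mem_insert, Finset.mem_singleton] at this
    rcases this with rfl | rfl | rfl <;> [exact hx haz; exact hy haz; exact hw haz]
  have hreach : (properPowerGraph (Equiv.Perm (Fin n))).Reachable ⟨z, hz⟩ ⟨c3, hc31⟩ :=
    ppg_reach_mul hdisj.commute hz hc31 (by rw [h2, ht.orderOf]; norm_num)
  refine ReachesSwap.of_reach hreach ?_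
  -- now c3 reaches a swap
  obtain ⟨t, htc, htd⟩ := exists_fresh_points ({x, y, w} : Finset (Fin n)) 2 (by
    have : ({x, y, w} : Finset (Fin n)).card ≤ 3 := by
      refine (Finset.card_insert_le _ _).trans (Nat.succ_le_succ ?_)
      exact (Finset.card_insert_le _ _).trans (by simp)
    omega)
  obtain ⟨a, b, hab, rfl⟩ := Finset.card_eq_two.mp htc
  have hd : ∀ u ∈ ({a, b} : Finset (Fin n)), u ∉ c3.support := by
    intro u hu hus
    exact (Finset.disjoint_left.mp htd hu) (hsupp hus)
  refine reachesSwap_of_odd_order hc31 (by rw [ht.orderOf]; omega) hab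
    (hd a (by simp)) (hd b (by simp))

/-- Any two transpositions are connected. -/
lemma swap_reach_swap (hn : 8 ≤ n) {w1 w2 : Equiv.Perm (Fin n)}
    (h1 : w1.IsSwap) (h2 : w2.IsSwap) (hw1 : w1 ≠ 1) (hw2 : w2 ≠ 1) :
    (properPowerGraph (Equiv.Perm (Fin n))).Reachable ⟨w1, hw1⟩ ⟨w2, hw2⟩ := by
  obtain ⟨a, b, hab, rfl⟩ := h1
  obtain ⟨c, d, hcd, rfl⟩ := h2
  obtain ⟨t, htc, htd⟩ := exists_fresh_points ({a, b, c, d} : Finset (Fin n)) 3 (by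
    have : ({a, b, c, d} : Finset (Fin n)).card ≤ 4 := by
      refine (Finset.card_insert_le _ _).trans (Nat.succ_le_succ ?_)
      refine (Finset.card_insert_le _ _).trans (Nat.succ_le_succ ?_)
      exact (Finset.card_insert_le _ _).trans (by simp)
    omega)
  obtain ⟨x, y, w, hxy, hxw, hyw, rfl⟩ := Finset.card_eq_three.mp htc
  set c3 := Equiv.swap x y * Equiv.swap x w with hc3
  have ht : c3.IsThreeCycle := Equiv.Perm.isThreeCycle_swap_mul_swap_same hxy hxw hyw
  have hc31 : c3 ≠ 1 := by
    intro h
    have := ht.orderOf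
    rw [h, orderOf_one] at this
    omega
  have hsupp : c3.support ⊆ {x, y, w} := by
    refine (Equiv.Perm.support_mul_le _ _).trans ?_
    rw [Equiv.Perm.support_swap hxy, Equiv.Perm.support_swap hxw]
    intro u hu
    simp only [Finset.sup_eq_union, Finset.mem_union, Finset.mem_insert,
      Finset.mem_singleton] at hu ⊢
    tauto
  have hdisj : ∀ (e f : Fin n), e ≠ f → e ∈ ({a,b,c,d} : Finset (Fin n)) →
      f ∈ ({a,b,c,d} : Finset (Fin n)) → (Equiv.swap e f).Disjoint c3 := by
    intro e f hef he hf
    rw [Equiv.Perm.disjoint_iff_disjoint_support, Equiv.Perm.support_swap hef]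
    refine Finset.disjoint_left.mpr fun u hu huc => ?_
    have hut : u ∈ ({x, y, w} : Finset (Fin n)) := hsupp huc
    have : u ∈ ({a,b,c,d} : Finset (Fin n)) := by
      rcases Finset.mem_insert.mp hu with rfl | hu' 
      · exact he
      · rw [Finset.mem_singleton.mp hu']; exact hf
    exact (Finset.disjoint_left.mp htd hut) this
  have hr1 : (properPowerGraph (Equiv.Perm (Fin n))).Reachable
      ⟨Equiv.swap a b, hw1⟩ ⟨c3, hc31⟩ :=
    ppg_reach_mul (hdisj a b hab (by simp) (by simp)).commute hw1 hc31
      (by rw [orderOf_swap hab, ht.orderOf]; norm_num)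
  have hr2 : (properPowerGraph (Equiv.Perm (Fin n))).Reachable
      ⟨Equiv.swap c d, hw2⟩ ⟨c3, hc31⟩ :=
    ppg_reach_mul (hdisj c d hcd (by simp) (by simp)).commute hw2 hc31
      (by rw [orderOf_swap hcd, ht.orderOf]; norm_num)
  exact hr1.trans hr2.symm

end Main2
section Main3

open Equiv Equiv.Perm

variable {n : ℕ}

/-- Any element of order 2 reaches a swap. -/
lemma reachesSwap_of_order_two (hn : 8 ≤ n) {z : Equiv.Perm (Fin n)}
    (h2 : orderOf z = 2) (hz : z ≠ 1) : ReachesSwap z hz := by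
  obtain ⟨k, hk0, hktype, hkcard⟩ := prime_order_cycleType Nat.prime_two h2
  have hkn : k * 2 ≤ n := hkcard ▸ card_le_n z.support
  by_cases hk : k ≤ 2
  · -- at least three fixed points
    obtain ⟨t, htc, htd⟩ := exists_fresh_points z.support 3 (by omega)
    obtain ⟨x, y, w, hxy, hxw, hyw, rfl⟩ := Finset.card_eq_three.mp htc
    have hd : ∀ u ∈ ({x, y, w} : Finset (Fin n)), u ∉ z.support :=
      fun u hu hus => (Finset.disjoint_left.mp htd hu) hus
    exact reachesSwap_of_order_two_fixed hn h2 hz hxy hxw hyw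
      (hd x (by simp)) (hd y (by simp)) (hd w (by simp))
  · -- k ≥ 3 : use the 6-cycle model
    push_neg at hk
    obtain ⟨E, R, hE, hR, hdisj⟩ := exists_disjoint_model (α := Fin n) ({6} : Multiset ℕ)
      (Multiset.replicate (k - 3) 2)
      (by
        simp only [Multiset.sum_singleton, Multiset.sum_replicate, smul_eq_mul,
          Fintype.card_fin]
        omega)
      (by intro a ha; simp at ha; omega)
      (by intro a ha; rw [Multiset.eq_of_mem_replicate ha])
    have hEo : orderOf E = 6 := by
      rw [← Equiv.Perm.lcm_cycleType, hE, Multiset.lcm_singleton, normalize_eq]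
    have hEsc : E.support.card = 6 := by
      rw [← Equiv.Perm.sum_cycleType, hE, Multiset.sum_singleton]
    have hR2 : R ^ 2 = 1 := by
      rw [← orderOf_dvd_iff_pow_eq_one, ← Equiv.Perm.lcm_cycleType, hR]
      exact Multiset.lcm_dvd.mpr fun x hx => by rw [Multiset.eq_of_mem_replicate hx]
    set M := E * R with hM
    have hcomm : Commute E R := hdisj.commute
    have hR3 : R ^ 3 = R := by
      have : R ^ 3 = R ^ 2 * R := by rw [pow_succ]
      rw [this, hR2, one_mul]
    have hM3 : M ^ 3 = E ^ 3 * R := by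
      rw [hM, hcomm.mul_pow, hR3]
    have hM2 : M ^ 2 = E ^ 2 := by rw [hM, hcomm.mul_pow, hR2, mul_one]
    have hsupp3 : (E ^ 3).support = E.support := by
      refine support_pow_eq_of_cycleType ?_
      rw [hE]
      intro l hl
      rw [Multiset.mem_singleton.mp hl]
      omega
    have hsupp2 : (E ^ 2).support = E.support := by
      refine support_pow_eq_of_cycleType ?_
      rw [hE]
      intro l hl
      rw [Multiset.mem_singleton.mp hl]
      omega
    have hoE3 : orderOf (E ^ 3) = 2 := by
      rw [orderOf_pow, hEo]
      norm_num
    have hoE2 : orderOf (E ^ 2) = 3 := by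
      rw [orderOf_pow, hEo]
      norm_num
    have hE31 : E ^ 3 ≠ 1 := by
      intro h; rw [h, orderOf_one] at hoE3; omega
    have hE21 : E ^ 2 ≠ 1 := by
      intro h; rw [h, orderOf_one] at hoE2; omega
    -- cycle type of E ^ 3
    obtain ⟨k3, _, hk3type, hk3card⟩ := prime_order_cycleType Nat.prime_two hoE3
    have hk3 : k3 = 3 := by rw [hsupp3, hEsc] at hk3card; omega
    -- Disjoint (E ^ 3) R
    have hdisj3 : (E ^ 3).Disjoint R := by
      rw [Equiv.Perm.disjoint_iff_disjoint_support, hsupp3]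
      exact Equiv.Perm.disjoint_iff_disjoint_support.mp hdisj
    -- cycle type of M ^ 3 matches z
    have htype : (M ^ 3).cycleType = z.cycleType := by
      rw [hM3, hdisj3.cycleType_mul, hk3type, hk3, hR, hktype, ← Multiset.replicate_add]
      congr 1
      omega
    have hM31 : M ^ 3 ≠ 1 := by
      rw [hM3]
      intro h
      have := congrArg Equiv.Perm.cycleType h
      rw [hdisj3.cycleType_mul, hk3type, hk3, hR, Equiv.Perm.cycleType_one,
        ← Multiset.replicate_add] at this
      have := congrArg Multiset.card this
      simp at this
    have hM1 : M ≠ 1 := by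
      intro h; rw [h, one_pow] at hM31; exact hM31 rfl
    -- M ^ 3 reaches a swap
    have hRS : ReachesSwap (M ^ 3) hM31 := by
      refine ReachesSwap.of_reach (ppg_reach_of_pow hM31 hM1 ⟨3, rfl⟩) ?_
      have hr2 : (properPowerGraph (Equiv.Perm (Fin n))).Reachable
          ⟨M, hM1⟩ ⟨M ^ 2, hM2 ▸ hE21⟩ :=
        (ppg_reach_of_pow (hM2 ▸ hE21) hM1 ⟨2, rfl⟩).symm
      refine ReachesSwap.of_reach hr2 ?_
      -- M ^ 2 = E ^ 2 has order 3 and at least two fixed points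
      obtain ⟨t, htc, htd⟩ := exists_fresh_points (M ^ 2).support 2 (by
        have : (M ^ 2).support.card = 6 := by rw [hM2, hsupp2, hEsc]
        omega)
      obtain ⟨a, b, hab, rfl⟩ := Finset.card_eq_two.mp htc
      have hd : ∀ u ∈ ({a, b} : Finset (Fin n)), u ∉ (M ^ 2).support :=
        fun u hu hus => (Finset.disjoint_left.mp htd hu) hus
      refine reachesSwap_of_odd_order _ (by rw [hM2, hoE2]; omega) hab
        (hd a (by simp)) (hd b (by simp))
    exact hRS.conj hz (Equiv.Perm.isConj_of_cycleType_eq htype)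

end Main3
section Main4

open Equiv Equiv.Perm

variable {n : ℕ}

/-- Any element of odd prime order `p ≤ n - 2` reaches a swap. -/
lemma reachesSwap_of_odd_prime_order (hn : 8 ≤ n) {p : ℕ} (hp : p.Prime) (hpodd : p ≠ 2)
    (hpn : p ≤ n - 2) {z : Equiv.Perm (Fin n)}
    (hz2 : orderOf z = p) (hz : z ≠ 1) : ReachesSwap z hz := by
  have hp2 : 2 ≤ p := hp.two_le
  have hp3 : 3 ≤ p := by rcases Nat.lt_or_ge p 3 with h | h; · interval_cases p <;> simp_all
                         · exact h
  have hpodd' : p % 2 = 1 := Nat.odd_iff.mp (hp.odd_of_ne_two hpodd)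
  obtain ⟨k, hk0, hktype, hkcard⟩ := prime_order_cycleType hp hz2
  have hkn : k * p ≤ n := hkcard ▸ card_le_n z.support
  by_cases hk : k = 1
  · -- single cycle, at least two fixed points
    have hsc : z.support.card = p := by rw [hkcard, hk, one_mul]
    obtain ⟨t, htc, htd⟩ := exists_fresh_points z.support 2 (by omega)
    obtain ⟨a, b, hab, rfl⟩ := Finset.card_eq_two.mp htc
    have hd : ∀ u ∈ ({a, b} : Finset (Fin n)), u ∉ z.support :=
      fun u hu hus => (Finset.disjoint_left.mp htd hu) hus
    refine reachesSwap_of_odd_order hz ?_ hab (hd a (by simp)) (hd b (by simp))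
    rw [hz2]
    omega
  · -- k ≥ 2 : merge two cycles into a 2p-cycle
    have hk2 : 2 ≤ k := by omega
    -- choose the exponent
    obtain ⟨u, t, hut, huodd, hpu⟩ : ∃ u t : ℕ, 2 * u = 1 + p * t ∧ u % 2 = 1 ∧ ¬ p ∣ u := by
      rcases Nat.even_or_odd ((p + 1) / 2) with he | ho
      · have he' : (p + 1) / 2 % 2 = 0 := Nat.even_iff.mp he
        refine ⟨(p + 1) / 2 + p, 3, by omega, by omega, fun hdvd => ?_⟩
        have h1 : p ∣ (p + 1) / 2 :=
          (Nat.dvd_add_right (dvd_refl p)).mp (by rwa [Nat.add_comm] at hdvd)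
        have := Nat.le_of_dvd (by omega) h1
        omega
      · have ho' : (p + 1) / 2 % 2 = 1 := Nat.odd_iff.mp ho
        refine ⟨(p + 1) / 2, 1, by omega, ho', fun hdvd => ?_⟩
        have := Nat.le_of_dvd (by omega) hdvd
        omega
    obtain ⟨E, R, hE, hR, hdisj⟩ := exists_disjoint_model (α := Fin n) ({2 * p} : Multiset ℕ)
      (Multiset.replicate (k - 2) p)
      (by
        simp only [Multiset.sum_singleton, Multiset.sum_replicate, smul_eq_mul,
          Fintype.card_fin]
        have : (k - 2) * p + 2 * p = k * p := by
          have : k - 2 + 2 = k := by omega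
          nlinarith [this]
        omega)
      (by intro a ha; simp at ha; omega)
      (by intro a ha; rw [Multiset.eq_of_mem_replicate ha]; omega)
    have hEo : orderOf E = 2 * p := by
      rw [← Equiv.Perm.lcm_cycleType, hE, Multiset.lcm_singleton, normalize_eq]
    have hEsc : E.support.card = 2 * p := by
      rw [← Equiv.Perm.sum_cycleType, hE, Multiset.sum_singleton]
    have hRp : R ^ p = 1 := by
      rw [← orderOf_dvd_iff_pow_eq_one, ← Equiv.Perm.lcm_cycleType, hR]
      exact Multiset.lcm_dvd.mpr fun x hx => by rw [Multiset.eq_of_mem_replicate hx]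
    set j := 2 * u with hj
    have hRj : R ^ j = R := by
      rw [hut, pow_add, pow_one, pow_mul, hRp, one_pow, mul_one]
    set M := E * R with hM
    have hcomm : Commute E R := hdisj.commute
    have hMj : M ^ j = E ^ j * R := by rw [hM, hcomm.mul_pow, hRj]
    have hMp : M ^ p = E ^ p := by rw [hM, hcomm.mul_pow, hRp, mul_one]
    have hndvd : ¬ (2 * p ∣ j) := by
      intro hdvd
      exact hpu ((mul_dvd_mul_iff_left (by omega : (2:ℕ) ≠ 0)).mp hdvd)
    have hsuppj : (E ^ j).support = E.support := by
      refine support_pow_eq_of_cycleType ?_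
      rw [hE]
      intro l hl
      rw [Multiset.mem_singleton.mp hl]
      exact hndvd
    have hgcd : Nat.gcd (2 * p) j = 2 := by
      rw [hj, Nat.gcd_mul_left]
      have : Nat.gcd p u = 1 := (Nat.Prime.coprime_iff_not_dvd hp).mpr hpu
      rw [this, mul_one]
    have hoEj : orderOf (E ^ j) = p := by
      rw [orderOf_pow, hEo, hgcd]
      omega
    have hoEp : orderOf (E ^ p) = 2 := by
      rw [orderOf_pow, hEo, Nat.gcd_eq_right (dvd_mul_left p 2)]
      rw [Nat.mul_div_assoc 2 (dvd_refl p), Nat.div_self (by omega), mul_one]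
    have hEj1 : E ^ j ≠ 1 := by
      intro h; rw [h, orderOf_one] at hoEj; omega
    have hEp1 : E ^ p ≠ 1 := by
      intro h; rw [h, orderOf_one] at hoEp; omega
    obtain ⟨k2, _, hk2type, hk2card⟩ := prime_order_cycleType hp hoEj
    have hk2' : k2 = 2 := by
      rw [hsuppj, hEsc] at hk2card
      exact (Nat.eq_of_mul_eq_mul_right (by omega) hk2card).symm
    have hdisjj : (E ^ j).Disjoint R := by
      rw [Equiv.Perm.disjoint_iff_disjoint_support, hsuppj]
      exact Equiv.Perm.disjoint_iff_disjoint_support.mp hdisj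
    have htype : (M ^ j).cycleType = z.cycleType := by
      rw [hMj, hdisjj.cycleType_mul, hk2type, hk2', hR, hktype, ← Multiset.replicate_add]
      congr 1
      omega
    have hMj1 : M ^ j ≠ 1 := by
      intro h
      have := congrArg Equiv.Perm.cycleType h
      rw [htype, hktype, Equiv.Perm.cycleType_one] at this
      have := congrArg Multiset.card this
      simp at this
      omega
    have hM1 : M ≠ 1 := by
      intro h; rw [h, one_pow] at hMj1; exact hMj1 rfl
    have hRS : ReachesSwap (M ^ j) hMj1 := by
      refine ReachesSwap.of_reach (ppg_reach_of_pow hMj1 hM1 ⟨j, rfl⟩) ?_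
      have hr2 : (properPowerGraph (Equiv.Perm (Fin n))).Reachable
          ⟨M, hM1⟩ ⟨M ^ p, hMp ▸ hEp1⟩ :=
        (ppg_reach_of_pow (hMp ▸ hEp1) hM1 ⟨p, rfl⟩).symm
      refine ReachesSwap.of_reach hr2 ?_
      exact reachesSwap_of_order_two hn (by rw [hMp]; exact hoEp) _
    exact hRS.conj hz (Equiv.Perm.isConj_of_cycleType_eq htype)

end Main4
section Top

open Equiv Equiv.Perm

variable {n : ℕ}

lemma reachesSwap_any (hn : 8 ≤ n) {σ : Equiv.Perm (Fin n)} (hσ1 : σ ≠ 1)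
    (hσ : ¬ ∃ p : ℕ, p.Prime ∧ n - 1 ≤ p ∧ orderOf σ = p) : ReachesSwap σ hσ1 := by
  by_cases hex : ∃ l ∈ σ.cycleType, l.minFac ≤ n - 2
  · obtain ⟨l, hl, hlf⟩ := hex
    have hl2 : 2 ≤ l := Equiv.Perm.two_le_of_mem_cycleType hl
    set r := l.minFac with hrdef
    have hr : r.Prime := Nat.minFac_prime (by omega)
    have hrord : r ∣ orderOf σ := (Nat.minFac_dvd l).trans (Equiv.Perm.dvd_of_mem_cycleType hl)
    obtain ⟨m, hm⟩ := hrord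
    have hord0 : orderOf σ ≠ 0 := (orderOf_pos σ).ne'
    have hm0 : m ≠ 0 := by
      intro h; rw [h, mul_zero] at hm; exact hord0 hm
    have hdiv : orderOf σ / r = m := by
      rw [hm, mul_comm, Nat.mul_div_assoc m (dvd_refl r), Nat.div_self hr.pos, mul_one]
    set z := σ ^ (orderOf σ / r) with hzdef
    have hoz : orderOf z = r := by
      rw [hzdef, orderOf_pow, hdiv, hm, Nat.gcd_eq_right (dvd_mul_left m r),
        Nat.mul_div_assoc r (dvd_refl m), Nat.div_self (by omega : 0 < m), mul_one]
    have hz1 : z ≠ 1 := by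
      intro h; rw [h, orderOf_one] at hoz; have := hr.two_le; omega
    have hreach : (properPowerGraph (Equiv.Perm (Fin n))).Reachable ⟨σ, hσ1⟩ ⟨z, hz1⟩ :=
      (ppg_reach_of_pow hz1 hσ1 ⟨orderOf σ / r, rfl⟩).symm
    refine ReachesSwap.of_reach hreach ?_
    by_cases hr2 : r = 2
    · exact reachesSwap_of_order_two hn (hr2 ▸ hoz) hz1
    · exact reachesSwap_of_odd_prime_order hn hr hr2 hlf hoz hz1
  · exfalso
    push_neg at hex
    have hct0 : σ.cycleType ≠ 0 := fun h => hσ1 (Equiv.Perm.cycleType_eq_zero.mp h)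
    obtain ⟨l, hl⟩ := Multiset.exists_mem_of_ne_zero hct0
    have hl2 : 2 ≤ l := Equiv.Perm.two_le_of_mem_cycleType hl
    have hminfac := hex l hl
    have hminle : l.minFac ≤ l := Nat.minFac_le (by omega)
    have hsum : σ.cycleType.sum ≤ n := by
      rw [Equiv.Perm.sum_cycleType]
      exact card_le_n _
    have hln : l ≤ n := le_trans (Multiset.single_le_sum (fun x _ => Nat.zero_le x) l hl) hsum
    have hlprime : l.Prime := by
      by_contra hnp
      have hsq := Nat.minFac_sq_le_self (by omega) hnp
      rw [pow_two] at hsq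
      have h7 : 7 ≤ l.minFac := by omega
      have hmul : 7 * l.minFac ≤ l.minFac * l.minFac := Nat.mul_le_mul_right _ h7
      have h2 : 7 * l.minFac ≤ l := le_trans hmul hsq
      omega
    -- cycleType σ = {l}
    have herase : σ.cycleType.erase l = 0 := by
      by_contra h0
      obtain ⟨l', hl'⟩ := Multiset.exists_mem_of_ne_zero h0
      have hl'mem : l' ∈ σ.cycleType := Multiset.mem_of_mem_erase hl'
      have hl'2 : n - 2 < l'.minFac := hex l' hl'mem
      have hl'min : l'.minFac ≤ l' :=
        Nat.minFac_le (by have := Equiv.Perm.two_le_of_mem_cycleType hl'mem; omega)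
      have hsum2 : l + l' ≤ σ.cycleType.sum := by
        have hc : σ.cycleType = l ::ₘ σ.cycleType.erase l := (Multiset.cons_erase hl).symm
        rw [hc, Multiset.sum_cons]
        have := Multiset.single_le_sum (fun x _ => Nat.zero_le x) l' hl'
        omega
      omega
    have hctl : σ.cycleType = {l} := by
      have := Multiset.cons_erase hl
      rw [herase] at this
      simpa using this.symm
    have hord : orderOf σ = l := by
      rw [← Equiv.Perm.lcm_cycleType, hctl, Multiset.lcm_singleton, normalize_eq]
    exact hσ ⟨l, hlprime, by omega, hord⟩

end Top

theorem stmt_17 (n : ℕ) (hn : 8 ≤ n) (σ τ : Equiv.Perm (Fin n))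
    (hσ1 : σ ≠ 1) (hτ1 : τ ≠ 1)
    (hσ : ¬ ∃ p : ℕ, p.Prime ∧ n - 1 ≤ p ∧ orderOf σ = p)
    (hτ : ¬ ∃ p : ℕ, p.Prime ∧ n - 1 ≤ p ∧ orderOf τ = p) :
    (properPowerGraph (Equiv.Perm (Fin n))).Reachable ⟨σ, hσ1⟩ ⟨τ, hτ1⟩ := by
  obtain ⟨w1, hw1, hs1⟩ := reachesSwap_any hn hσ1 hσ
  obtain ⟨w2, hw2, hs2⟩ := reachesSwap_any hn hτ1 hτ
  exact hw1.trans ((swap_reach_swap hn hs1 hs2 w1.2 w2.2).trans hw2.symm)
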